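/- Let M ≥ 1, 0 < p < 2M/(2M+1), σ > 0, λ̄ = ln((1−p)/(p/(2M))) > 0, γ > 0, j = min{M, ⌊(1/2)√(1+λ̄/γ²)⌋+1}. Then the derivative of ρ(γ) (the level success probability of the L0-regularized Babai point) with respect to γ, on each interval where j is constant, equals (2/√π)[((M−j)/M)p e^{−γ²} + (1−p)(2j−1)e^{−(λ̄/(2(2j−1)γ) + (2j−1)γ/2)²}], which is strictly positive; hence ρ is strictly increasing on each such interval. -/

import Mathlib

noncomputable def erf (z : ℝ) : ℝ :=
  (2 / Real.sqrt Real.pi) * ∫ t in (0:ℝ)..z, Real.exp (-t ^ 2)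

lemma hasDerivAt_erf (z : ℝ) :
    HasDerivAt erf ((2 / Real.sqrt Real.pi) * Real.exp (-z ^ 2)) z := by
  have hc : Continuous fun t : ℝ => Real.exp (-t ^ 2) := by continuity
  have h := intervalIntegral.integral_hasDerivAt_right
    (hc.intervalIntegrable 0 z)
    (hc.aestronglyMeasurable.stronglyMeasurableAtFilter)
    hc.continuousAt
  exact h.const_mul (2 / Real.sqrt Real.pi)

theorem stmt_9 (M : ℕ) (hM : 1 ≤ M) (p : ℝ) (hp : 0 < p)
    (hplt : p < 2 * M / (2 * M + 1))
    (lamb : ℝ) (hlamb : lamb = Real.log ((1 - p) / (p / (2 * M))))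
    (j₀ : ℕ) (hj₀ : 1 ≤ j₀) (hj₀M : j₀ ≤ M)
    (ρ : ℝ → ℝ)
    (hρ : ∀ γ : ℝ, ρ γ =
      p / (2 * M) + (((M : ℝ) - (j₀ : ℝ)) / M) * p * erf γ
        - (p / (2 * M)) * erf (lamb / (2 * (2 * (j₀ : ℝ) - 1) * γ) - (2 * (j₀ : ℝ) - 1) * γ / 2)
        + (1 - p) * erf (lamb / (2 * (2 * (j₀ : ℝ) - 1) * γ) + (2 * (j₀ : ℝ) - 1) * γ / 2))
    (D : ℝ → ℝ)
    (hD : ∀ γ : ℝ, D γ = (2 / Real.sqrt Real.pi) *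
      ((((M : ℝ) - (j₀ : ℝ)) / M) * p * Real.exp (-γ ^ 2)
        + (1 - p) * (2 * (j₀ : ℝ) - 1) *
          Real.exp (-(lamb / (2 * (2 * (j₀ : ℝ) - 1) * γ) + (2 * (j₀ : ℝ) - 1) * γ / 2) ^ 2))) :
    (∀ γ : ℝ, 0 < γ → HasDerivAt ρ (D γ) γ ∧ 0 < D γ) ∧
      StrictMonoOn ρ (Set.Ioi 0) := by
  have hMpos : (0:ℝ) < (M:ℝ) := by exact_mod_cast hM
  have hMj : (j₀:ℝ) ≤ (M:ℝ) := by exact_mod_cast hj₀M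
  have hj1 : (1:ℝ) ≤ (j₀:ℝ) := by exact_mod_cast hj₀
  set a : ℝ := 2 * (j₀:ℝ) - 1 with ha_def
  have ha : 0 < a := by simp only [ha_def]; linarith
  have h2M : (0:ℝ) < 2 * M + 1 := by linarith
  have hp1 : p < 1 := by
    have : 2 * (M:ℝ) / (2 * M + 1) < 1 := (div_lt_one h2M).mpr (by linarith)
    linarith
  have h1p : 0 < 1 - p := by linarith
  have hpM : 0 < p / (2 * M) := by positivity
  have hratio : 0 < (1 - p) / (p / (2 * M)) := by positivity
  have hexp_lamb : Real.exp lamb = (1 - p) / (p / (2 * M)) := by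
    rw [hlamb, Real.exp_log hratio]
  have hsqpi : 0 < Real.sqrt Real.pi := Real.sqrt_pos.mpr Real.pi_pos
  -- main pointwise fact
  have key : ∀ γ : ℝ, 0 < γ → HasDerivAt ρ (D γ) γ ∧ 0 < D γ := by
    intro γ hγ
    have hγ0 : γ ≠ 0 := hγ.ne'
    have ha0 : a ≠ 0 := ha.ne'
    have hden : 2 * a * γ ≠ 0 := by positivity
    set u : ℝ := lamb / (2 * a * γ) - a * γ / 2 with hu_def
    set v : ℝ := lamb / (2 * a * γ) + a * γ / 2 with hv_def
    -- derivative of inner functions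
    have hfrac : HasDerivAt (fun x : ℝ => lamb / (2 * a * x))
        ((0 * (2 * a * γ) - lamb * (2 * a)) / (2 * a * γ) ^ 2) γ := by
      have hg : HasDerivAt (fun x : ℝ => 2 * a * x) (2 * a) γ := by
        simpa using (hasDerivAt_id γ).const_mul (2 * a)
      exact (hasDerivAt_const γ lamb).div hg hden
    have hlin : HasDerivAt (fun x : ℝ => a * x / 2) (a / 2) γ := by
      simpa using ((hasDerivAt_id γ).const_mul a).div_const 2
    have hu : HasDerivAt (fun x : ℝ => lamb / (2 * a * x) - a * x / 2)
        ((0 * (2 * a * γ) - lamb * (2 * a)) / (2 * a * γ) ^ 2 - a / 2) γ := hfrac.sub hlin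
    have hv : HasDerivAt (fun x : ℝ => lamb / (2 * a * x) + a * x / 2)
        ((0 * (2 * a * γ) - lamb * (2 * a)) / (2 * a * γ) ^ 2 + a / 2) γ := hfrac.add hlin
    have heu : HasDerivAt (fun x : ℝ => erf (lamb / (2 * a * x) - a * x / 2))
        ((2 / Real.sqrt Real.pi) * Real.exp (-u ^ 2) *
          ((0 * (2 * a * γ) - lamb * (2 * a)) / (2 * a * γ) ^ 2 - a / 2)) γ :=
      by have := (hasDerivAt_erf u).comp γ hu; exact this
    have hev : HasDerivAt (fun x : ℝ => erf (lamb / (2 * a * x) + a * x / 2))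
        ((2 / Real.sqrt Real.pi) * Real.exp (-v ^ 2) *
          ((0 * (2 * a * γ) - lamb * (2 * a)) / (2 * a * γ) ^ 2 + a / 2)) γ :=
      by have := (hasDerivAt_erf v).comp γ hv; exact this
    have hterm1 : HasDerivAt (fun x : ℝ => (((M : ℝ) - (j₀ : ℝ)) / M) * p * erf x)
        ((((M : ℝ) - (j₀ : ℝ)) / M) * p * ((2 / Real.sqrt Real.pi) * Real.exp (-γ ^ 2))) γ :=
      (hasDerivAt_erf γ).const_mul _
    have hρfun : ρ = fun x : ℝ =>
        p / (2 * M) + (((M : ℝ) - (j₀ : ℝ)) / M) * p * erf x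
          - (p / (2 * M)) * erf (lamb / (2 * a * x) - a * x / 2)
          + (1 - p) * erf (lamb / (2 * a * x) + a * x / 2) := by
      funext x; rw [hρ x]
    have hbig : HasDerivAt ρ
        (0 + (((M : ℝ) - (j₀ : ℝ)) / M) * p * ((2 / Real.sqrt Real.pi) * Real.exp (-γ ^ 2))
          - (p / (2 * M)) * ((2 / Real.sqrt Real.pi) * Real.exp (-u ^ 2) *
              ((0 * (2 * a * γ) - lamb * (2 * a)) / (2 * a * γ) ^ 2 - a / 2))
          + (1 - p) * ((2 / Real.sqrt Real.pi) * Real.exp (-v ^ 2) *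
              ((0 * (2 * a * γ) - lamb * (2 * a)) / (2 * a * γ) ^ 2 + a / 2))) γ := by
      rw [hρfun]
      exact (((hasDerivAt_const γ (p / (2 * M))).add hterm1).sub (heu.const_mul _)).add
        (hev.const_mul _)
    -- key exponential identity
    have hsq : u ^ 2 = v ^ 2 - lamb := by
      simp only [hu_def, hv_def]
      field_simp
      ring
    have hkey : p / (2 * M) * Real.exp (-u ^ 2) = (1 - p) * Real.exp (-v ^ 2) := by
      rw [hsq, neg_sub, sub_eq_add_neg, Real.exp_add, hexp_lamb]
      field_simp
    have hDval : D γ = 0 + (((M : ℝ) - (j₀ : ℝ)) / M) * p * ((2 / Real.sqrt Real.pi) * Real.exp (-γ ^ 2))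
          - (p / (2 * M)) * ((2 / Real.sqrt Real.pi) * Real.exp (-u ^ 2) *
              ((0 * (2 * a * γ) - lamb * (2 * a)) / (2 * a * γ) ^ 2 - a / 2))
          + (1 - p) * ((2 / Real.sqrt Real.pi) * Real.exp (-v ^ 2) *
              ((0 * (2 * a * γ) - lamb * (2 * a)) / (2 * a * γ) ^ 2 + a / 2)) := by
      have e1 : (p / (2 * M)) * ((2 / Real.sqrt Real.pi) * Real.exp (-u ^ 2) *
              ((0 * (2 * a * γ) - lamb * (2 * a)) / (2 * a * γ) ^ 2 - a / 2))
          = (1 - p) * ((2 / Real.sqrt Real.pi) * Real.exp (-v ^ 2) *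
              ((0 * (2 * a * γ) - lamb * (2 * a)) / (2 * a * γ) ^ 2 - a / 2)) := by
        have : ∀ c : ℝ, p / (2 * M) * ((2 / Real.sqrt Real.pi) * Real.exp (-u ^ 2) * c)
            = (1 - p) * ((2 / Real.sqrt Real.pi) * Real.exp (-v ^ 2) * c) := by
          intro c
          calc p / (2 * M) * ((2 / Real.sqrt Real.pi) * Real.exp (-u ^ 2) * c)
              = (p / (2 * M) * Real.exp (-u ^ 2)) * ((2 / Real.sqrt Real.pi) * c) := by ring
            _ = ((1 - p) * Real.exp (-v ^ 2)) * ((2 / Real.sqrt Real.pi) * c) := by rw [hkey]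
            _ = (1 - p) * ((2 / Real.sqrt Real.pi) * Real.exp (-v ^ 2) * c) := by ring
        exact this _
      rw [hD, e1, ← hv_def]
      ring
    refine ⟨by rw [hDval]; exact hbig, ?_⟩
    rw [hD γ]
    have ht1 : 0 ≤ (((M : ℝ) - (j₀ : ℝ)) / M) * p * Real.exp (-γ ^ 2) := by
      apply mul_nonneg (mul_nonneg (div_nonneg (by linarith) hMpos.le) hp.le)
      exact (Real.exp_pos _).le
    have ht2 : 0 < (1 - p) * (2 * (j₀ : ℝ) - 1) *
        Real.exp (-(lamb / (2 * (2 * (j₀ : ℝ) - 1) * γ) + (2 * (j₀ : ℝ) - 1) * γ / 2) ^ 2) := by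
      apply mul_pos (mul_pos h1p (by linarith)) (Real.exp_pos _)
    have : 0 < 2 / Real.sqrt Real.pi := by positivity
    nlinarith
  refine ⟨key, ?_⟩
  have hcont : ContinuousOn ρ (Set.Ioi 0) := fun x hx =>
    ((key x hx).1.differentiableAt.continuousAt).continuousWithinAt
  refine strictMonoOn_of_deriv_pos (convex_Ioi 0) hcont ?_
  intro x hx
  rw [interior_Ioi] at hx
  rw [(key x hx).1.deriv]
  exact (key x hx).2
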